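/- Let ω : ℤ² × ℤ² → ℂˣ be a 2-cocycle for the trivial action, i.e. ω(g,h)·ω(g+h,k) = ω(g,h+k)·ω(h,k) for all g, h, k ∈ ℤ². Then ω is cohomologous to a cocycle taking values in the unit circle 𝕋 = {w ∈ ℂˣ : |w| = 1} (i.e. there exists b : ℤ² → ℂˣ such that (g,h) ↦ ω(g,h)·b(g)·b(h)·b(g+h)⁻¹ takes values in 𝕋) if and only if |ω(e₁,e₂)| = |ω(e₂,e₁)|, where e₁ = (1,0) and e₂ = (0,1). -/

import Mathlib

/-- Carrier of the extension of `ℝ` by `ℤ²` determined by a 2-cocycle. -/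
structure ExtE where
  a : ℝ
  g : ℤ × ℤ

lemma ExtE.ext' {p q : ExtE} (h1 : p.a = q.a) (h2 : p.g = q.g) : p = q := by
  cases p; cases q; simp_all

/-- The extension group `ℝ ×_f ℤ²` of a symmetric real 2-cocycle. -/
def egroup (f : ℤ × ℤ → ℤ × ℤ → ℝ)
    (hc : ∀ g h k, f g h + f (g + h) k = f g (h + k) + f h k)
    (hs : ∀ g h, f g h = f h g) : CommGroup ExtE where
  mul p q := ⟨p.a + q.a + f p.g q.g, p.g + q.g⟩
  one := ⟨-f 0 0, 0⟩
  inv p := ⟨-p.a - f (-p.g) p.g - f 0 0, -p.g⟩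
  div p q := ⟨p.a + (-q.a - f (-q.g) q.g - f 0 0) + f p.g (-q.g), p.g + -q.g⟩
  div_eq_mul_inv p q := rfl
  mul_assoc p q r := by
    have h := hc p.g q.g r.g
    show ExtE.mk ((p.a + q.a + f p.g q.g) + r.a + f (p.g + q.g) r.g) (p.g + q.g + r.g)
      = ExtE.mk (p.a + (q.a + r.a + f q.g r.g) + f p.g (q.g + r.g)) (p.g + (q.g + r.g))
    exact ExtE.ext' (by dsimp; linarith) (add_assoc _ _ _)
  one_mul p := by
    have h : f 0 p.g = f 0 0 := by have := hc 0 0 p.g; simp at this; linarith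
    show ExtE.mk (-f 0 0 + p.a + f 0 p.g) (0 + p.g) = p
    exact ExtE.ext' (by dsimp; rw [h]; ring) (zero_add _)
  mul_one p := by
    have h : f p.g 0 = f 0 0 := by have := hc p.g 0 0; simp at this; linarith
    show ExtE.mk (p.a + -f 0 0 + f p.g 0) (p.g + 0) = p
    exact ExtE.ext' (by dsimp; rw [h]; ring) (add_zero _)
  inv_mul_cancel p := by
    show ExtE.mk ((-p.a - f (-p.g) p.g - f 0 0) + p.a + f (-p.g) p.g) (-p.g + p.g)
      = ExtE.mk (-f 0 0) 0
    exact ExtE.ext' (by dsimp; ring) (neg_add_cancel _)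
  mul_comm p q := by
    show ExtE.mk (p.a + q.a + f p.g q.g) (p.g + q.g)
      = ExtE.mk (q.a + p.a + f q.g p.g) (q.g + p.g)
    exact ExtE.ext' (by dsimp; rw [hs p.g q.g]; ring) (add_comm _ _)

/-- A symmetric 2-cocycle on `ℤ²` with values in `ℝ` is a coboundary. -/
lemma symm_cocycle_coboundary (f : ℤ × ℤ → ℤ × ℤ → ℝ)
    (hc : ∀ g h k, f g h + f (g + h) k = f g (h + k) + f h k)
    (hs : ∀ g h, f g h = f h g) :
    ∃ φ : ℤ × ℤ → ℝ, ∀ g h, f g h = φ (g + h) - φ g - φ h := by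
  letI := egroup f hc hs
  set x : ExtE := ⟨0, (1, 0)⟩ with hx
  set y : ExtE := ⟨0, (0, 1)⟩ with hy
  -- the projection to `ℤ²` is a homomorphism
  let π : ExtE →* Multiplicative (ℤ × ℤ) :=
    MonoidHom.mk' (fun p => Multiplicative.ofAdd p.g) (fun p q => rfl)
  set t : ℤ × ℤ → ExtE := fun g => x ^ g.1 * y ^ g.2 with ht
  have hsnd : ∀ g, (t g).g = g := by
    intro g
    have heq : π (t g) = Multiplicative.ofAdd g := by
      rw [ht]
      simp only [map_mul, map_zpow]
      show Multiplicative.ofAdd ((1, 0) : ℤ × ℤ) ^ g.1 *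
        Multiplicative.ofAdd ((0, 1) : ℤ × ℤ) ^ g.2 = _
      rw [← ofAdd_zsmul, ← ofAdd_zsmul, ← ofAdd_add]
      congr 1
      simp [Prod.ext_iff]
    exact congrArg Multiplicative.toAdd heq
  have hmul : ∀ g h, t (g + h) = t g * t h := by
    intro g h
    show x ^ (g.1 + h.1) * y ^ (g.2 + h.2) = (x ^ g.1 * y ^ g.2) * (x ^ h.1 * y ^ h.2)
    rw [zpow_add, zpow_add]
    exact mul_mul_mul_comm _ _ _ _
  refine ⟨fun g => (t g).a, fun g h => ?_⟩
  have h2 : (t g * t h).a = (t g).a + (t h).a + f (t g).g (t h).g := rfl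
  rw [hsnd g, hsnd h] at h2
  have h3 := congrArg ExtE.a (hmul g h)
  rw [h2] at h3
  linarith

/-- A 2-cocycle on `ℤ²` is symmetric as soon as it is symmetric on `(e₁, e₂)`. -/
lemma cocycle_symm (f : ℤ × ℤ → ℤ × ℤ → ℝ)
    (hc : ∀ g h k, f g h + f (g + h) k = f g (h + k) + f h k)
    (h12 : f (1, 0) (0, 1) = f (0, 1) (1, 0)) :
    ∀ g h, f g h = f h g := by
  set c : ℤ × ℤ → ℤ × ℤ → ℝ := fun g h => f g h - f h g with hcdef
  have hadd : ∀ g h k, c (g + h) k = c g k + c h k := by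
    intro g h k
    have A := hc g h k
    have B := hc k g h
    have C := hc g k h
    rw [show k + g = g + k from add_comm _ _] at B
    rw [show k + h = h + k from add_comm _ _] at C
    simp only [hcdef]
    linarith
  have hanti : ∀ g h, c g h = -c h g := by
    intro g h; simp only [hcdef]; ring
  have hhom : ∀ k, ∀ g : ℤ × ℤ, c g k = g.1 • c (1, 0) k + g.2 • c (0, 1) k := by
    intro k g
    let C : (ℤ × ℤ) →+ ℝ := AddMonoidHom.mk' (fun g => c g k) (fun g h => hadd g h k)
    have hg : g = g.1 • ((1, 0) : ℤ × ℤ) + g.2 • ((0, 1) : ℤ × ℤ) := by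
      simp [Prod.ext_iff]
    calc c g k = C g := rfl
      _ = C (g.1 • ((1, 0) : ℤ × ℤ) + g.2 • ((0, 1) : ℤ × ℤ)) := by rw [← hg]
      _ = g.1 • c (1, 0) k + g.2 • c (0, 1) k := by
          rw [map_add, map_zsmul, map_zsmul]; rfl
  have c11 : c (1, 0) ((1, 0) : ℤ × ℤ) = 0 := by have := hanti (1, 0) (1, 0); linarith
  have c22 : c (0, 1) ((0, 1) : ℤ × ℤ) = 0 := by have := hanti (0, 1) (0, 1); linarith
  have c12 : c (1, 0) ((0, 1) : ℤ × ℤ) = 0 := by simp only [hcdef]; rw [h12]; ring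
  have c21 : c (0, 1) ((1, 0) : ℤ × ℤ) = 0 := by simp only [hcdef]; rw [h12]; ring
  intro g h
  have h1 : c (1, 0) h = 0 := by
    rw [hanti, hhom (1, 0) h, c21, c11]; simp
  have h2 : c (0, 1) h = 0 := by
    rw [hanti, hhom (0, 1) h, c12, c22]; simp
  have h0 : c g h = 0 := by rw [hhom h g, h1, h2]; simp
  simp only [hcdef] at h0
  linarith

/-- A `ℂˣ`-valued 2-cocycle `ω` on `ℤ²` (trivial action) is cohomologous to a
circle-valued cocycle if and only if `|ω(e₁,e₂)| = |ω(e₂,e₁)|`. -/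
theorem stmt11 (ω : (ℤ × ℤ) → (ℤ × ℤ) → ℂˣ)
    (hω : ∀ g h k : ℤ × ℤ, ω g h * ω (g + h) k = ω g (h + k) * ω h k) :
    (∃ b : (ℤ × ℤ) → ℂˣ, ∀ g h : ℤ × ℤ,
        ‖((ω g h * (b g * b h * (b (g + h))⁻¹) : ℂˣ) : ℂ)‖ = 1) ↔
      ‖((ω (1, 0) (0, 1) : ℂˣ) : ℂ)‖
        = ‖((ω (0, 1) (1, 0) : ℂˣ) : ℂ)‖ := by
  set f : ℤ × ℤ → ℤ × ℤ → ℝ := fun g h => Real.log ‖((ω g h : ℂˣ) : ℂ)‖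
    with hf
  have habs_pos : ∀ g h, 0 < ‖((ω g h : ℂˣ) : ℂ)‖ := fun g h =>
    norm_pos_iff.mpr (Units.ne_zero _)
  have hc : ∀ g h k, f g h + f (g + h) k = f g (h + k) + f h k := by
    intro g h k
    have := congrArg (fun u : ℂˣ => Real.log ‖(u : ℂ)‖) (hω g h k)
    simpa [Units.val_mul, norm_mul, Real.log_mul (habs_pos _ _).ne' (habs_pos _ _).ne']
      using this
  constructor
  · rintro ⟨b, hb⟩
    have hbp : ∀ g, (0:ℝ) < ‖((b g : ℂ))‖ := fun g =>
      norm_pos_iff.mpr (Units.ne_zero _)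
    have key : ∀ g h : ℤ × ℤ,
        f g h = Real.log ‖((b (g+h) : ℂ))‖
          - Real.log ‖((b g : ℂ))‖ - Real.log ‖((b h : ℂ))‖ := by
      intro g h
      have h0 := congrArg Real.log (hb g h)
      rw [Real.log_one, Units.val_mul, Units.val_mul, Units.val_mul,
        Units.val_inv_eq_inv_val, norm_mul, norm_mul, norm_mul, norm_inv,
        Real.log_mul (habs_pos g h).ne'
          (mul_pos (mul_pos (hbp g) (hbp h)) (inv_pos.mpr (hbp (g + h)))).ne',
        Real.log_mul (mul_pos (hbp g) (hbp h)).ne' (inv_pos.mpr (hbp (g + h))).ne',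
        Real.log_mul (hbp g).ne' (hbp h).ne', Real.log_inv] at h0
      simp only [hf] at h0 ⊢
      linarith
    have h1 := key (1, 0) (0, 1)
    have h2 := key (0, 1) (1, 0)
    rw [show ((1:ℤ),(0:ℤ)) + ((0:ℤ),(1:ℤ)) = ((0:ℤ),(1:ℤ)) + ((1:ℤ),(0:ℤ)) from
      add_comm _ _] at h1
    have hfe : f (1, 0) (0, 1) = f (0, 1) (1, 0) := by rw [h1, h2]; ring
    have := congrArg Real.exp hfe
    rwa [hf, Real.exp_log (habs_pos _ _), Real.exp_log (habs_pos _ _)] at this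
  · intro h12
    have hfe : f (1, 0) (0, 1) = f (0, 1) (1, 0) := by rw [hf]; simp [h12]
    have hs := cocycle_symm f hc hfe
    obtain ⟨φ, hφ⟩ := symm_cocycle_coboundary f hc hs
    refine ⟨fun g => Units.mk0 (Real.exp (φ g) : ℂ) (Complex.ofReal_ne_zero.mpr (Real.exp_ne_zero _)), fun g h => ?_⟩
    have habs : ∀ g : ℤ × ℤ, ‖((Real.exp (φ g) : ℂ))‖ = Real.exp (φ g) := by
      intro g
      rw [Complex.norm_real, Real.norm_eq_abs, abs_of_pos (Real.exp_pos _)]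
    rw [Units.val_mul, Units.val_mul, Units.val_mul, Units.val_inv_eq_inv_val,
      norm_mul, norm_mul, norm_mul, norm_inv]
    simp only [Units.val_mk0]
    rw [habs, habs, habs]
    have hfgh : ‖((ω g h : ℂˣ) : ℂ)‖ = Real.exp (f g h) := by
      rw [hf]; exact (Real.exp_log (habs_pos _ _)).symm
    rw [hfgh, hφ g h, ← Real.exp_neg, ← Real.exp_add, ← Real.exp_add, ← Real.exp_add,
      ← Real.exp_zero]
    congr 1
    ring
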